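/- Let p be a prime and let k and N be positive integers. For any integer n ≥ N, we have Σ_{i=0}^{φ(p^N)-1} B_k^{(-(n+i))} ≡ 0 (mod p^N). -/
import Mathlib


/-- Stirling numbers of the second kind. -/
def stirling2 : ℕ → ℕ → ℕ
  | 0, 0 => 1
  | 0, _ + 1 => 0
  | _ + 1, 0 => 0
  | n + 1, m + 1 => (m + 1) * stirling2 n (m + 1) + stirling2 n m

/-- The poly-Bernoulli number `B_n^{(-k)}` with negative upper index `-k`. -/
def polyBernoulliB (k n : ℕ) : ℤ :=
  (-1 : ℤ) ^ n * ∑ m ∈ Finset.range (n + 1),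
    (-1 : ℤ) ^ m * (m.factorial : ℤ) * (stirling2 n m : ℤ) * ((m : ℤ) + 1) ^ k

/-- The poly-Bernoulli number of type C, `C_n^{(-k)}`, with negative upper index `-k`. -/
def polyBernoulliC (k n : ℕ) : ℤ :=
  (-1 : ℤ) ^ n * ∑ m ∈ Finset.range (n + 1),
    (-1 : ℤ) ^ m * (m.factorial : ℤ) * (stirling2 (n + 1) (m + 1) : ℤ) * ((m : ℤ) + 1) ^ k

theorem polyBernoulliB_sum_period_upper (p : ℕ) (hp : p.Prime) (k N : ℕ)
    (hk : 0 < k) (hN : 0 < N) (n : ℕ) (hn : N ≤ n) :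
    (∑ i ∈ Finset.range (p ^ N).totient, polyBernoulliB (n + i) k)
      ≡ 0 [ZMOD ((p : ℤ) ^ N)] := by
  rw [Int.modEq_zero_iff_dvd]
  have expand : (∑ i ∈ Finset.range (p ^ N).totient, polyBernoulliB (n + i) k)
      = (-1 : ℤ) ^ k * ∑ m ∈ Finset.range (k + 1), (-1 : ℤ) ^ m *
          ((m.factorial : ℤ) * (stirling2 k m : ℤ) * ((m : ℤ) + 1) ^ n *
            ∑ i ∈ Finset.range (p ^ N).totient, ((m : ℤ) + 1) ^ i) := by
    unfold polyBernoulliB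
    rw [← Finset.mul_sum]
    congr 1
    rw [Finset.sum_comm]
    apply Finset.sum_congr rfl
    intro m _
    rw [Finset.mul_sum, Finset.mul_sum]
    apply Finset.sum_congr rfl
    intro i _
    rw [pow_add]
    ring
  rw [expand]
  refine Dvd.dvd.mul_left (Finset.dvd_sum fun m hm => Dvd.dvd.mul_left ?_ _) _
  -- goal: (p:ℤ)^N ∣ m! * S(k,m) * (m+1)^n * ∑ i, (m+1)^i
  rcases Nat.eq_zero_or_pos m with rfl | hm0
  · obtain ⟨k', rfl⟩ := Nat.exists_eq_succ_of_ne_zero hk.ne'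
    simp [stirling2]
  by_cases hpm : p ∣ m + 1
  · -- p^N divides (m+1)^n since n ≥ N
    have h1 : ((p : ℤ)) ^ N ∣ ((m : ℤ) + 1) ^ n := by
      calc ((p : ℤ)) ^ N ∣ (p : ℤ) ^ n := pow_dvd_pow _ hn
        _ ∣ ((m : ℤ) + 1) ^ n := by
            apply pow_dvd_pow_of_dvd
            exact_mod_cast Int.natCast_dvd_natCast.mpr hpm
    exact (h1.mul_left _).mul_right _
  · set v := m.factorization p with hv
    have hpvm : p ^ v ∣ m := Nat.ordProj_dvd m p
    by_cases hvN : N ≤ v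
    · -- p^N divides m!
      have h1 : (p : ℤ) ^ N ∣ (m.factorial : ℤ) := by
        have : p ^ N ∣ m.factorial :=
          (pow_dvd_pow p hvN).trans (hpvm.trans (Nat.dvd_factorial hm0 le_rfl))
        exact_mod_cast Int.natCast_dvd_natCast.mpr this
      exact ((h1.mul_right _).mul_right _).mul_right _
    · push_neg at hvN
      set c := m / p ^ v with hc
      have hmc : m = p ^ v * c := (Nat.ordProj_mul_ordCompl_eq_self m p).symm
      have hpc : ¬ p ∣ c := Nat.not_dvd_ordCompl hp hm0.ne'
      -- Euler's theorem
      have hcop : (m + 1).Coprime (p ^ N) :=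
        (Nat.Coprime.pow_right _ ((Nat.Prime.coprime_iff_not_dvd hp).mpr hpm).symm)
      have heuler : p ^ N ∣ (m + 1) ^ (p ^ N).totient - 1 := by
        have := Nat.ModEq.pow_totient hcop
        exact (Nat.modEq_iff_dvd' (Nat.one_le_pow _ _ (Nat.succ_pos m))).mp this.symm
      have heulerZ : (p : ℤ) ^ N ∣ ((m : ℤ) + 1) ^ (p ^ N).totient - 1 := by
        have h := Int.natCast_dvd_natCast.mpr heuler
        rw [Nat.cast_sub (Nat.one_le_pow _ _ (Nat.succ_pos m))] at h
        push_cast at h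
        exact h
      -- geometric sum
      set G : ℤ := ∑ i ∈ Finset.range (p ^ N).totient, ((m : ℤ) + 1) ^ i with hG
      have hgeom : G * (m : ℤ) = ((m : ℤ) + 1) ^ (p ^ N).totient - 1 := by
        have := geom_sum_mul ((m : ℤ) + 1) (p ^ N).totient
        simpa using this
      have hdvdGm : (p : ℤ) ^ v * (p : ℤ) ^ (N - v) ∣ (p : ℤ) ^ v * ((c : ℤ) * G) := by
        rw [← pow_add]
        have hNv : v + (N - v) = N := by omega
        rw [hNv]
        have : (p : ℤ) ^ v * ((c : ℤ) * G) = G * (m : ℤ) := by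
          rw [hmc]; push_cast; ring
        rw [this, hgeom]
        exact heulerZ
      have hpv0 : ((p : ℤ)) ^ v ≠ 0 := pow_ne_zero _ (by exact_mod_cast hp.ne_zero)
      have hdvdcG : (p : ℤ) ^ (N - v) ∣ (c : ℤ) * G :=
        (mul_dvd_mul_iff_left hpv0).mp hdvdGm
      have hcopZ : IsCoprime ((p : ℤ) ^ (N - v)) (c : ℤ) := by
        have : Nat.Coprime (p ^ (N - v)) c :=
          Nat.Coprime.pow_left _ ((Nat.Prime.coprime_iff_not_dvd hp).mpr hpc)
        exact_mod_cast Nat.isCoprime_iff_coprime.mpr this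
      have hdvdG : (p : ℤ) ^ (N - v) ∣ G := hcopZ.dvd_of_dvd_mul_left hdvdcG
      have hdvdfact : (p : ℤ) ^ v ∣ (m.factorial : ℤ) := by
        have : p ^ v ∣ m.factorial := hpvm.trans (Nat.dvd_factorial hm0 le_rfl)
        exact_mod_cast Int.natCast_dvd_natCast.mpr this
      have hfinal : (p : ℤ) ^ N ∣ (m.factorial : ℤ) * G := by
        have hNv : v + (N - v) = N := by omega
        calc (p : ℤ) ^ N = (p : ℤ) ^ v * (p : ℤ) ^ (N - v) := by rw [← pow_add, hNv]
          _ ∣ (m.factorial : ℤ) * G := mul_dvd_mul hdvdfact hdvdG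
      have : (m.factorial : ℤ) * (stirling2 k m : ℤ) * ((m : ℤ) + 1) ^ n * G
          = ((m.factorial : ℤ) * G) * ((stirling2 k m : ℤ) * ((m : ℤ) + 1) ^ n) := by ring
      rw [this]
      exact hfinal.mul_right _
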